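/- Let F_q be a quantum torus. Then the derived Lie algebra [F_q, F_q] is a perfect Lie algebra with zero center, and consequently its derivation algebra Der([F_q, F_q]) is complete. -/

import Mathlib

open Finset in
/-- The twisting scalar `σ(a,b) = ∏_{i>j} q_{ji}^{a_j b_i}` of a quantum torus. -/
noncomputable def quantumSigma {n : ℕ} {F : Type*} [Field F]
    (q : Matrix (Fin n) (Fin n) F) (a b : Fin n → ℤ) : F :=
  ∏ i : Fin n, ∏ j ∈ Finset.univ.filter (fun j => j < i), q j i ^ (a j * b i)

/-- A Lie algebra is complete if its center is zero and every derivation is inner. -/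
def IsCompleteLieAlgebra (K : Type*) (M : Type*) [Field K] [LieRing M] [LieAlgebra K M] : Prop :=
  LieAlgebra.center K M = ⊥ ∧
    ∀ D : LieDerivation K M M, ∃ m : M, D = LieDerivation.ad K M m

theorem quantumSigma_ne_zero {n : ℕ} {F : Type*} [Field F]
    (q : Matrix (Fin n) (Fin n) F) (hq0 : ∀ i j, q i j ≠ 0) (a b : Fin n → ℤ) :
    quantumSigma q a b ≠ 0 := by
  unfold quantumSigma
  rw [Finset.prod_ne_zero_iff]
  intro i _
  rw [Finset.prod_ne_zero_iff]
  intro j _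
  exact zpow_ne_zero _ (hq0 j i)

theorem quantumSigma_add_left {n : ℕ} {F : Type*} [Field F]
    (q : Matrix (Fin n) (Fin n) F) (hq0 : ∀ i j, q i j ≠ 0) (a a' b : Fin n → ℤ) :
    quantumSigma q (a + a') b = quantumSigma q a b * quantumSigma q a' b := by
  unfold quantumSigma
  rw [← Finset.prod_mul_distrib]
  refine Finset.prod_congr rfl fun i _ => ?_
  rw [← Finset.prod_mul_distrib]
  refine Finset.prod_congr rfl fun j _ => ?_
  rw [← zpow_add₀ (hq0 j i), Pi.add_apply, add_mul]

theorem quantumSigma_add_right {n : ℕ} {F : Type*} [Field F]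
    (q : Matrix (Fin n) (Fin n) F) (hq0 : ∀ i j, q i j ≠ 0) (a b b' : Fin n → ℤ) :
    quantumSigma q a (b + b') = quantumSigma q a b * quantumSigma q a b' := by
  unfold quantumSigma
  rw [← Finset.prod_mul_distrib]
  refine Finset.prod_congr rfl fun i _ => ?_
  rw [← Finset.prod_mul_distrib]
  refine Finset.prod_congr rfl fun j _ => ?_
  rw [← zpow_add₀ (hq0 j i), Pi.add_apply, mul_add]

theorem der_complete_of_perfect_centerless {K L : Type*} [Field K] [LieRing L] [LieAlgebra K L]
    (hp : ⁅(⊤ : LieIdeal K L), (⊤ : LieIdeal K L)⁆ = ⊤)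
    (hc : LieAlgebra.center K L = ⊥) :
    IsCompleteLieAlgebra K (LieDerivation K L L) := by
  have hinj : Function.Injective (LieDerivation.ad K L) :=
    LieDerivation.injective_ad_of_center_eq_bot hc
  constructor
  · rw [eq_bot_iff]
    intro D hD
    rw [LieAlgebra.center, LieModule.mem_maxTrivSubmodule] at hD
    have hDx : ∀ x : L, D x = 0 := by
      intro x
      have h0 : ⁅D, LieDerivation.ad K L x⁆ = 0 := by
        rw [← lie_skew, hD (LieDerivation.ad K L x), neg_zero]
      rw [LieDerivation.lie_der_ad_eq_ad_der] at h0
      have := hinj (h0.trans (map_zero (LieDerivation.ad K L)).symm)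
      exact this
    simp only [LieSubmodule.mem_bot]
    ext x; simp [hDx x]
  · intro Δ
    have h1 : ∀ x y : L, Δ (LieDerivation.ad K L ⁅x, y⁆) =
        LieDerivation.ad K L ((Δ (LieDerivation.ad K L x)) y - (Δ (LieDerivation.ad K L y)) x) := by
      intro x y
      rw [map_sub (LieDerivation.ad K L), LieHom.map_lie, Δ.apply_lie_eq_add, ← LieDerivation.lie_der_ad_eq_ad_der,
        ← LieDerivation.lie_der_ad_eq_ad_der, ← lie_skew (LieDerivation.ad K L x)]
      abel
    have h2 : ∀ z : L, ∃ w : L, Δ (LieDerivation.ad K L z) = LieDerivation.ad K L w := by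
    -- the set of z whose image under Δ∘ad is in the range of ad is a Lie ideal containing [L,L]=L
      intro z
      let S : LieIdeal K L :=
        { carrier := {z : L | ∃ w, Δ (LieDerivation.ad K L z) = LieDerivation.ad K L w}
          add_mem' := by
            rintro a b ⟨wa, ha⟩ ⟨wb, hb⟩
            exact ⟨wa + wb, by rw [map_add (LieDerivation.ad K L), map_add, ha, hb, map_add (LieDerivation.ad K L)]⟩
          zero_mem' := ⟨0, by rw [map_zero (LieDerivation.ad K L), map_zero]⟩
          smul_mem' := by
            rintro c a ⟨w, hw⟩
            exact ⟨c • w, by rw [map_smul (LieDerivation.ad K L), map_smul, hw, map_smul (LieDerivation.ad K L)]⟩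
          lie_mem := by
            rintro x m -
            exact ⟨_, h1 x m⟩ }
      have hS : S = ⊤ := by
        rw [eq_top_iff, ← hp, LieSubmodule.lieIdeal_oper_eq_span]
        rw [LieSubmodule.lieSpan_le]
        rintro _ ⟨x, y, rfl⟩
        exact ⟨_, h1 x.1 y.1⟩
      exact (hS ▸ LieSubmodule.mem_top z : z ∈ S)
    choose f hf using h2
    have hfadd : ∀ x y, f (x + y) = f x + f y := fun x y => hinj <| by
      rw [← hf, map_add (LieDerivation.ad K L), map_add, hf, hf, map_add (LieDerivation.ad K L)]
    have hfsmul : ∀ (c : K) x, f (c • x) = c • f x := fun c x => hinj <| by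
      rw [← hf, map_smul (LieDerivation.ad K L), map_smul, hf, map_smul (LieDerivation.ad K L)]
    have hflie : ∀ x y, f ⁅x, y⁆ = ⁅f x, y⁆ + ⁅x, f y⁆ := by
      intro x y
      apply hinj
      rw [← hf, h1, hf, hf]
      congr 1
      simp only [LieDerivation.ad_apply_apply]
      rw [← lie_skew x (f y)]
      abel
    let δ : LieDerivation K L L :=
      { toFun := f
        map_add' := hfadd
        map_smul' := hfsmul
        leibniz' := fun a b => by
          simp only [LinearMap.coe_mk, AddHom.coe_mk]
          rw [hflie, ← lie_skew b (f a)]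
          abel }
    refine ⟨δ, ?_⟩
    have hδad : ∀ x : L, δ x = f x := fun _ => rfl
    have hδ : ∀ x : L, ⁅δ, LieDerivation.ad K L x⁆ = Δ (LieDerivation.ad K L x) := by
      intro x
      rw [LieDerivation.lie_der_ad_eq_ad_der, hδad, hf]
    have key : ∀ E : LieDerivation K L L, Δ E = ⁅δ, E⁆ := by
      intro E
      have hz : ∀ x : L, (Δ E - ⁅δ, E⁆) x = 0 := by
        intro x
        have e2 := Δ.apply_lie_eq_add E (LieDerivation.ad K L x)
        rw [LieDerivation.lie_der_ad_eq_ad_der E x, hf x,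
          LieDerivation.lie_der_ad_eq_ad_der E (f x), hf (E x),
          LieDerivation.lie_der_ad_eq_ad_der (Δ E) x, ← map_add (LieDerivation.ad K L)] at e2
        have e3 : f (E x) = E (f x) + (Δ E) x := hinj e2
        rw [LieDerivation.sub_apply, LieDerivation.commutator_apply, hδad, hδad, e3]
        abel
      have h0 : Δ E - ⁅δ, E⁆ = 0 := by
        ext x; simpa using hz x
      have := sub_eq_zero.mp h0
      exact this
    ext E x
    rw [key E, LieDerivation.ad_apply_apply]

attribute [local instance 100] LieRing.ofAssociativeRing

/-- The derived algebra `[F_q, F_q]` of a quantum torus is a perfect Lie algebra with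
zero center, and consequently its derivation algebra is complete. -/
theorem quantumTorus_derived_perfect_centerless_and_der_complete {n : ℕ} (F : Type*)
    [Field F] [CharZero F]
    (q : Matrix (Fin n) (Fin n) F) (hq0 : ∀ i j, q i j ≠ 0) (hq1 : ∀ i, q i i = 1)
    (hq2 : ∀ i j, q j i = (q i j)⁻¹)
    (A : Type*) [Ring A] [Algebra F A] (t : Module.Basis ((Fin n) → ℤ) F A)
    (hmul : ∀ a b : Fin n → ℤ, t a * t b = quantumSigma q a b • t (a + b)) :
    ⁅(⊤ : LieIdeal F ↥(⁅(⊤ : LieIdeal F A), (⊤ : LieIdeal F A)⁆ : LieIdeal F A)),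
        (⊤ : LieIdeal F ↥(⁅(⊤ : LieIdeal F A), (⊤ : LieIdeal F A)⁆ : LieIdeal F A))⁆ = ⊤ ∧
    LieAlgebra.center F ↥(⁅(⊤ : LieIdeal F A), (⊤ : LieIdeal F A)⁆ : LieIdeal F A) = ⊥ ∧
    IsCompleteLieAlgebra F
      (LieDerivation F ↥(⁅(⊤ : LieIdeal F A), (⊤ : LieIdeal F A)⁆ : LieIdeal F A)
        ↥(⁅(⊤ : LieIdeal F A), (⊤ : LieIdeal F A)⁆ : LieIdeal F A)) := by
  set σ : (Fin n → ℤ) → (Fin n → ℤ) → F := quantumSigma q with hσ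
  set d : (Fin n → ℤ) → (Fin n → ℤ) → F := fun a b => σ a b - σ b a with hd
  have hσ0 : ∀ a b, σ a b ≠ 0 := quantumSigma_ne_zero q hq0
  -- bracket formula
  have hbr : ∀ a b, ⁅t a, t b⁆ = d a b • t (a + b) := by
    intro a b
    rw [Ring.lie_def, hmul, hmul, add_comm b a, sub_smul]
  have hd_symm : ∀ a b, d a b = - d b a := fun a b => by simp [hd, neg_sub]
  have key1 : ∀ a c, d a (c - a) * σ a a = d a c := by
    intro a c
    have h1 : σ a (c - a) * σ a a = σ a c := by
      rw [← quantumSigma_add_right q hq0, sub_add_cancel]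
    have h2 : σ (c - a) a * σ a a = σ c a := by
      rw [← quantumSigma_add_left q hq0, sub_add_cancel]
    simp only [hd]
    rw [sub_mul, h1, h2]
  have key2 : ∀ a b, d a (a + b) = σ a a * d a b := by
    intro a b
    have h1 : σ a (a + b) = σ a a * σ a b := quantumSigma_add_right q hq0 a a b
    have h2 : σ (a + b) a = σ a a * σ b a := quantumSigma_add_left q hq0 a b a
    simp only [hd]
    rw [h1, h2, mul_sub]
  set S : Set (Fin n → ℤ) := {c | ∃ a, d a c ≠ 0} with hS
  have hS_sub : ∀ {a c : Fin n → ℤ}, d a c ≠ 0 → d a (c - a) ≠ 0 := by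
    intro a c h h0
    apply h
    rw [← key1 a c, h0, zero_mul]
  have hS_add : ∀ {a b : Fin n → ℤ}, d a b ≠ 0 → d a (a + b) ≠ 0 := by
    intro a b h
    rw [key2]
    exact mul_ne_zero (hσ0 a a) h
  have hmemS : ∀ {a c : Fin n → ℤ}, d a c ≠ 0 → a ∈ S := by
    intro a c h
    refine ⟨c, fun h0 => h ?_⟩
    rw [hd_symm, h0, neg_zero]
  set V : Submodule F A := Submodule.span F (t '' S) with hV
  have htS : ∀ c ∈ S, t c ∈ V := fun c hc => Submodule.subset_span ⟨c, hc, rfl⟩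
  have hbrV : ∀ a b, ⁅t a, t b⁆ ∈ V := by
    intro a b
    rw [hbr]
    by_cases h : d a b = 0
    · rw [h, zero_smul]; exact V.zero_mem
    · exact V.smul_mem _ (htS _ ⟨a, hS_add h⟩)
  have hlieV : ∀ x y : A, ⁅x, y⁆ ∈ V := by
    have hty : ∀ (a : Fin n → ℤ) (y : A), ⁅t a, y⁆ ∈ V := by
      intro a y
      have hy : y ∈ Submodule.span F (Set.range t) := by rw [t.span_eq]; exact Submodule.mem_top
      induction hy using Submodule.span_induction with
      | mem z h => obtain ⟨b, rfl⟩ := h; exact hbrV a b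
      | zero => rw [lie_zero]; exact V.zero_mem
      | add u v _ _ hu hv => rw [lie_add]; exact V.add_mem hu hv
      | smul c u _ hu => rw [lie_smul]; exact V.smul_mem c hu
    intro x y
    have hx : x ∈ Submodule.span F (Set.range t) := by rw [t.span_eq]; exact Submodule.mem_top
    induction hx using Submodule.span_induction with
    | mem z h => obtain ⟨a, rfl⟩ := h; exact hty a y
    | zero => rw [zero_lie]; exact V.zero_mem
    | add u v _ _ hu hv => rw [add_lie]; exact V.add_mem hu hv
    | smul c u _ hu => rw [smul_lie]; exact V.smul_mem c hu
  set I : LieIdeal F A := ⁅(⊤ : LieIdeal F A), (⊤ : LieIdeal F A)⁆ with hI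
  -- the derived ideal equals V
  have htI : ∀ c ∈ S, t c ∈ I := by
    intro c hc
    obtain ⟨a, ha⟩ := hc
    have h2 : d a (c - a) ≠ 0 := hS_sub ha
    have hac : a + (c - a) = c := by abel
    have hteq : t c = (d a (c - a))⁻¹ • ⁅t a, t (c - a)⁆ := by
      rw [hbr, smul_smul, inv_mul_cancel₀ h2, one_smul, hac]
    rw [hteq, hI]
    exact Submodule.smul_mem _ _
      (LieSubmodule.lie_mem_lie (LieSubmodule.mem_top _) (LieSubmodule.mem_top _))
  have hIle : ∀ v : A, v ∈ I → v ∈ V := by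
    intro v hv
    rw [hI, ← LieSubmodule.mem_toSubmodule, LieSubmodule.lieIdeal_oper_eq_linear_span] at hv
    refine Submodule.span_le.mpr ?_ hv
    rintro _ ⟨y, z, rfl⟩
    exact hlieV y.1 z.1
  have hVle : ∀ v : A, v ∈ V → v ∈ I := by
    intro v hv
    have hle : V ≤ LieSubmodule.toSubmodule I := by
      rw [hV, Submodule.span_le]
      rintro _ ⟨c, hc, rfl⟩
      exact htI c hc
    exact hle hv
  -- perfectness of the derived algebra
  have hperf : ⁅(⊤ : LieIdeal F ↥I), (⊤ : LieIdeal F ↥I)⁆ = ⊤ := by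
    rw [eq_top_iff]
    intro x _
    set J : LieIdeal F ↥I := ⁅(⊤ : LieIdeal F ↥I), (⊤ : LieIdeal F ↥I)⁆ with hJ
    have hmain : ∀ v, v ∈ V → ∀ h : v ∈ I, (⟨v, h⟩ : ↥I) ∈ J := by
      intro v hv
      induction hv using Submodule.span_induction with
      | mem z hz =>
        obtain ⟨c, hc, rfl⟩ := hz
        intro h
        obtain ⟨a, ha⟩ := hc
        have haS : a ∈ S := hmemS ha
        have hcaS : c - a ∈ S := ⟨a, hS_sub ha⟩
        have h2 : d a (c - a) ≠ 0 := hS_sub ha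
        have hac : a + (c - a) = c := by abel
        set xa : ↥I := ⟨t a, htI a haS⟩ with hxa
        set xb : ↥I := ⟨t (c - a), htI _ hcaS⟩ with hxb
        have hbrm : ⁅xa, xb⁆ ∈ J :=
          LieSubmodule.lie_mem_lie (LieSubmodule.mem_top _) (LieSubmodule.mem_top _)
        have heq : (⟨t c, h⟩ : ↥I) = (d a (c - a))⁻¹ • ⁅xa, xb⁆ := by
          apply Subtype.ext
          show t c = (d a (c - a))⁻¹ • (⁅xa, xb⁆ : A)
          have : (⁅xa, xb⁆ : A) = ⁅t a, t (c - a)⁆ := rfl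
          rw [this, hbr, smul_smul, inv_mul_cancel₀ h2, one_smul, hac]
        rw [heq]
        exact J.smul_mem _ hbrm
      | zero =>
        intro h
        have : (⟨0, h⟩ : ↥I) = 0 := rfl
        rw [this]; exact J.zero_mem
      | add u v hu hv ihu ihv =>
        intro h
        have hu' : u ∈ I := hVle u hu
        have hv' : v ∈ I := hVle v hv
        have : (⟨u + v, h⟩ : ↥I) = ⟨u, hu'⟩ + ⟨v, hv'⟩ := rfl
        rw [this]
        exact J.add_mem (ihu hu') (ihv hv')
      | smul c u hu ihu =>
        intro h
        have hu' : u ∈ I := hVle u hu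
        have : (⟨c • u, h⟩ : ↥I) = c • ⟨u, hu'⟩ := rfl
        rw [this]
        exact J.smul_mem _ (ihu hu')
    have hx1 : (x : A) ∈ V := hIle _ x.2
    have := hmain x.1 hx1 x.2
    simpa using this
  -- the center is trivial
  have hcen : LieAlgebra.center F ↥I = ⊥ := by
    rw [eq_bot_iff]
    intro x hx
    rw [LieAlgebra.center, LieModule.mem_maxTrivSubmodule] at hx
    rw [LieSubmodule.mem_bot]
    have hx1 : (x : A) ∈ V := hIle _ x.2
    set r := t.repr (x : A) with hr
    have hsupp : ↑r.support ⊆ S := by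
      rw [hV] at hx1
      exact (Module.Basis.mem_span_image t).mp hx1
    have hr0 : r = 0 := by
      ext c
      by_contra hc0
      have hcsupp : c ∈ r.support := Finsupp.mem_support_iff.mpr hc0
      have hcS : c ∈ S := hsupp hcsupp
      obtain ⟨a, ha⟩ := hcS
      have haS : a ∈ S := hmemS ha
      have hlie0 : ⁅t a, (x : A)⁆ = 0 := by
        have := hx ⟨t a, htI a haS⟩
        have hval := congrArg (fun z : ↥I => (z : A)) this
        simpa using hval
      -- apply the linear functional `y ↦ repr ⁅t a, y⁆ (a + c)`
      set φ : A →ₗ[F] F :=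
        (Finsupp.lapply (a + c)) ∘ₗ (t.repr : A →ₗ[F] ((Fin n → ℤ) →₀ F)) ∘ₗ
          ((LieAlgebra.ad F A) (t a)) with hφ
      have hφ_apply : ∀ y : A, φ y = t.repr ⁅t a, y⁆ (a + c) := fun y => rfl
      have hφ0 : φ (x : A) = 0 := by
        rw [hφ_apply, hlie0]
        simp
      have hφt : ∀ e : Fin n → ℤ, φ (t e) = if e = c then d a c else 0 := by
        intro e
        rw [hφ_apply, hbr]
        rw [map_smul, Module.Basis.repr_self]
        rw [Finsupp.smul_apply, Finsupp.single_apply]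
        by_cases he : e = c
        · subst he; simp
        · have : ¬ (a + e = a + c) := fun hh => he (by simpa using hh)
          simp [this, he]
      have hsum : φ (x : A) = ∑ e ∈ r.support, r e * φ (t e) := by
        conv_lhs => rw [← t.linearCombination_repr (x : A), Finsupp.linearCombination_apply,
          Finsupp.sum]
        rw [map_sum]
        refine Finset.sum_congr rfl fun e _ => ?_
        rw [map_smul, smul_eq_mul]
      have hsum2 : ∑ e ∈ r.support, r e * φ (t e) = r c * d a c := by
        rw [Finset.sum_eq_single c]
        · rw [hφt, if_pos rfl]
        · intro e _ he
          rw [hφt, if_neg he, mul_zero]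
        · intro h
          exact absurd hcsupp h
      have : r c * d a c = 0 := by rw [← hsum2, ← hsum, hφ0]
      rcases mul_eq_zero.mp this with h | h
      · exact hc0 h
      · exact ha h
    have : (x : A) = 0 := by
      have := congrArg (t.repr.symm) hr0
      rw [hr] at this
      simpa using this
    exact Subtype.ext this
  exact ⟨hperf, hcen, der_complete_of_perfect_centerless hperf hcen⟩
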